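/- Let S be a standard Borel space. Let M' := {(μ₁, μ₂) ∈ M(S) × M(S) : |μ₁ − μ₂|(S) = μ₁(S) + μ₂(S)}. Then M' is a measurable subset of M(S) × M(S), and the Jordan decomposition map ψ : μ ↦ (μ⁺, μ⁻) is a measurable bijection from M±(S) onto M' whose inverse (μ₁, μ₂) ↦ μ₁ − μ₂ is also measurable. -/

import Mathlib

open MeasureTheory
open scoped symmDiff

/-- The σ-algebra on the space `M±(S)` of finite signed measures on `S`,
generated by the evaluation maps `μ ↦ μ B` over measurable sets `B`. -/
instance signedMeasureMeasurableSpace (S : Type*) [MeasurableSpace S] :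
    MeasurableSpace (SignedMeasure S) :=
  ⨆ (B : Set S) (_ : MeasurableSet B),
    MeasurableSpace.comap (fun μ : SignedMeasure S => μ B) inferInstance

/-- A finite (nonnegative) measure regarded as a finite signed measure. -/
noncomputable def toSigned {S : Type*} [MeasurableSpace S]
    (μ : {μ : Measure S // IsFiniteMeasure μ}) : SignedMeasure S :=
  @Measure.toSignedMeasure S _ μ.1 μ.2

/-- The Jordan decomposition map `ψ : μ ↦ (μ⁺, μ⁻)` from `M±(S)` to `M(S) × M(S)`. -/
noncomputable def jordanPair {S : Type*} [MeasurableSpace S] (μ : SignedMeasure S) :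
    {μ : Measure S // IsFiniteMeasure μ} × {μ : Measure S // IsFiniteMeasure μ} :=
  (⟨μ.toJordanDecomposition.posPart, inferInstance⟩,
   ⟨μ.toJordanDecomposition.negPart, inferInstance⟩)

section Aux

variable {S : Type*} [MeasurableSpace S]

lemma measurable_eval_signed {B : Set S} (hB : MeasurableSet B) :
    Measurable (fun μ : SignedMeasure S => μ B) :=
  Measurable.of_comap_le
    (le_iSup₂ (f := fun (B : Set S) (_ : MeasurableSet B) =>
      MeasurableSpace.comap (fun μ : SignedMeasure S => μ B) inferInstance) B hB)

lemma measurable_to_signed {X : Type*} [MeasurableSpace X] {f : X → SignedMeasure S}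
    (h : ∀ B, MeasurableSet B → Measurable fun x => f x B) : Measurable f := by
  rw [measurable_iff_comap_le]
  show MeasurableSpace.comap f (⨆ (B : Set S) (_ : MeasurableSet B),
    MeasurableSpace.comap (fun μ : SignedMeasure S => μ B) inferInstance) ≤ _
  rw [MeasurableSpace.comap_iSup]
  refine iSup_le fun B => ?_
  rw [MeasurableSpace.comap_iSup]
  refine iSup_le fun hB => ?_
  rw [MeasurableSpace.comap_comp]
  exact measurable_iff_comap_le.1 (h B hB)

lemma signed_apply_eq (s : SignedMeasure S) {A : Set S} (hA : MeasurableSet A) :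
    s A = (s.toJordanDecomposition.posPart A).toReal
      - (s.toJordanDecomposition.negPart A).toReal := by
  conv_lhs => rw [← s.toSignedMeasure_toJordanDecomposition]
  simp only [JordanDecomposition.toSignedMeasure, VectorMeasure.sub_apply,
    Measure.toSignedMeasure_apply_measurable hA, measureReal_def]

lemma abs_signed_apply_le (s : SignedMeasure S) {A : Set S} (hA : MeasurableSet A) :
    |s A| ≤ (s.totalVariation A).toReal := by
  rw [signed_apply_eq s hA, SignedMeasure.totalVariation, Measure.add_apply,
    ENNReal.toReal_add (measure_ne_top _ _) (measure_ne_top _ _)]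
  have h1 : 0 ≤ (s.toJordanDecomposition.posPart A).toReal := ENNReal.toReal_nonneg
  have h2 : 0 ≤ (s.toJordanDecomposition.negPart A).toReal := ENNReal.toReal_nonneg
  rw [abs_le]
  constructor <;> linarith

lemma ennreal_add_cancel {a b c d : ENNReal} (hac : a ≤ c) (hbd : b ≤ d)
    (h : a + b = c + d) (hc : c ≠ ⊤) (hd : d ≠ ⊤) : a = c ∧ b = d := by
  have ha : a ≠ ⊤ := (hac.trans_lt hc.lt_top).ne
  have hb : b ≠ ⊤ := (hbd.trans_lt hd.lt_top).ne
  have h' : a.toReal + b.toReal = c.toReal + d.toReal := by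
    rw [← ENNReal.toReal_add ha hb, ← ENNReal.toReal_add hc hd, h]
  have hac' : a.toReal ≤ c.toReal := ENNReal.toReal_mono hc hac
  have hbd' : b.toReal ≤ d.toReal := ENNReal.toReal_mono hd hbd
  constructor
  · rw [← ENNReal.toReal_eq_toReal_iff' ha hc]; linarith
  · rw [← ENNReal.toReal_eq_toReal_iff' hb hd]; linarith

lemma measure_eq_of_le_of_univ_eq {μ ν : Measure S} [IsFiniteMeasure ν]
    (h : μ ≤ ν) (hu : μ Set.univ = ν Set.univ) : μ = ν := by
  ext A hA
  have h1 : μ A + μ Aᶜ = ν A + ν Aᶜ := by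
    rw [measure_add_measure_compl hA, measure_add_measure_compl hA, hu]
  exact (ennreal_add_cancel (Measure.le_iff'.1 h A) (Measure.le_iff'.1 h Aᶜ) h1
    (measure_ne_top _ _) (measure_ne_top _ _)).1

/-- Key lemma: over a countably generated space there is a countable family of measurable
sets such that the positive part of every signed measure evaluates as a countable sup. -/
lemma exists_eval_posPart [MeasurableSpace.CountablyGenerated S] :
    ∃ e : ℕ → Set S, (∀ n, MeasurableSet (e n)) ∧
      ∀ (s : SignedMeasure S) (B : Set S), MeasurableSet B →
        s.toJordanDecomposition.posPart B = ⨆ n, ENNReal.ofReal (s (e n ∩ B)) := by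
  obtain ⟨b, hbc, hbgen⟩ := MeasurableSpace.CountablyGenerated.isCountablyGenerated (α := S)
  set 𝒜 : Set (Set S) := MeasureTheory.generateSetAlgebra b with h𝒜
  have h𝒜alg : IsSetAlgebra 𝒜 := isSetAlgebra_generateSetAlgebra
  have h𝒜c : 𝒜.Countable := countable_generateSetAlgebra hbc
  have hgen : ‹MeasurableSpace S› = MeasurableSpace.generateFrom 𝒜 := by
    rw [hbgen, h𝒜, generateFrom_generateSetAlgebra_eq]
  have h𝒜meas : ∀ A ∈ 𝒜, MeasurableSet A := fun A hA => by
    rw [hgen]; exact MeasurableSpace.measurableSet_generateFrom hA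
  obtain ⟨e, he⟩ := h𝒜c.exists_eq_range ⟨∅, h𝒜alg.empty_mem⟩
  have hem : ∀ n, MeasurableSet (e n) := fun n => h𝒜meas _ (he ▸ Set.mem_range_self n)
  refine ⟨e, hem, fun s B hB => ?_⟩
  haveI : IsFiniteMeasure s.totalVariation := ⟨by
    rw [SignedMeasure.totalVariation, Measure.add_apply]
    exact ENNReal.add_lt_top.2 ⟨measure_lt_top _ _, measure_lt_top _ _⟩⟩
  have hdense : s.totalVariation.MeasureDense 𝒜 :=
    Measure.MeasureDense.of_generateFrom_isSetAlgebra_finite _ h𝒜alg hgen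
  -- the ≥ direction
  have hge : (⨆ n, ENNReal.ofReal (s (e n ∩ B))) ≤ s.toJordanDecomposition.posPart B := by
    refine iSup_le fun n => ?_
    have h1 := signed_apply_eq s ((hem n).inter hB)
    have h2 : s (e n ∩ B) ≤ (s.toJordanDecomposition.posPart (e n ∩ B)).toReal := by
      rw [h1]
      linarith [ENNReal.toReal_nonneg (a := s.toJordanDecomposition.negPart (e n ∩ B))]
    calc ENNReal.ofReal (s (e n ∩ B))
        ≤ ENNReal.ofReal (s.toJordanDecomposition.posPart (e n ∩ B)).toReal :=
          ENNReal.ofReal_le_ofReal h2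
      _ = s.toJordanDecomposition.posPart (e n ∩ B) :=
          ENNReal.ofReal_toReal (measure_ne_top _ _)
      _ ≤ s.toJordanDecomposition.posPart B := measure_mono Set.inter_subset_right
  refine le_antisymm ?_ hge
  obtain ⟨P, hP₁, hP₂, hP₃, hpos, _⟩ := s.toJordanDecomposition_spec
  rw [hpos, SignedMeasure.toMeasureOfZeroLE_apply _ hP₂ hP₁ hB,
    ← ENNReal.ofReal_eq_coe_nnreal]
  set A₀ : Set S := P ∩ B with hA₀
  have hA₀m : MeasurableSet A₀ := hP₁.inter hB
  have hA₀B : A₀ ⊆ B := Set.inter_subset_right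
  have key : ∀ ε : ℝ, 0 < ε →
      ENNReal.ofReal (s A₀) ≤ (⨆ n, ENNReal.ofReal (s (e n ∩ B))) + ENNReal.ofReal ε := by
    intro ε hε
    obtain ⟨t, ht𝒜, hts⟩ := hdense.approx A₀ hA₀m (measure_ne_top _ _) (ε / 2) (by linarith)
    obtain ⟨n, hn⟩ : ∃ n, e n = t := by rw [he] at ht𝒜; exact ht𝒜
    have htm : MeasurableSet t := h𝒜meas t ht𝒜
    set u : Set S := A₀ \ (t ∩ B) with hu
    set v : Set S := (t ∩ B) \ A₀ with hv
    have hum : MeasurableSet u := hA₀m.diff (htm.inter hB)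
    have hvm : MeasurableSet v := (htm.inter hB).diff hA₀m
    have hu_sub : u ⊆ A₀ ∆ t := by
      intro x hx
      rw [Set.mem_symmDiff]
      exact Or.inl ⟨hx.1, fun h => hx.2 ⟨h, hA₀B hx.1⟩⟩
    have hv_sub : v ⊆ A₀ ∆ t := by
      intro x hx
      rw [Set.mem_symmDiff]
      exact Or.inr ⟨hx.1.1, hx.2⟩
    have hd1 : s A₀ = s (A₀ ∩ (t ∩ B)) + s u := by
      conv_lhs => rw [← Set.inter_union_diff A₀ (t ∩ B)]
      exact VectorMeasure.of_union
        (Set.disjoint_sdiff_right.mono_left Set.inter_subset_right)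
        (hA₀m.inter (htm.inter hB)) hum
    have hd2 : s (t ∩ B) = s (A₀ ∩ (t ∩ B)) + s v := by
      conv_lhs => rw [← Set.inter_union_diff (t ∩ B) A₀, Set.inter_comm (t ∩ B) A₀]
      exact VectorMeasure.of_union
        (Set.disjoint_sdiff_right.mono_left Set.inter_subset_left)
        (hA₀m.inter (htm.inter hB)) hvm
    have hsu := abs_signed_apply_le s hum
    have hsv := abs_signed_apply_le s hvm
    have htv : (s.totalVariation (A₀ ∆ t)).toReal < ε / 2 :=
      (ENNReal.lt_ofReal_iff_toReal_lt (measure_ne_top _ _)).1 hts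
    have hmu : (s.totalVariation u).toReal ≤ (s.totalVariation (A₀ ∆ t)).toReal :=
      ENNReal.toReal_mono (measure_ne_top _ _) (measure_mono hu_sub)
    have hmv : (s.totalVariation v).toReal ≤ (s.totalVariation (A₀ ∆ t)).toReal :=
      ENNReal.toReal_mono (measure_ne_top _ _) (measure_mono hv_sub)
    have habsu := abs_le.1 hsu
    have habsv := abs_le.1 hsv
    have hfinal : s A₀ ≤ s (t ∩ B) + ε := by linarith
    calc ENNReal.ofReal (s A₀) ≤ ENNReal.ofReal (s (t ∩ B) + ε) :=
          ENNReal.ofReal_le_ofReal hfinal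
      _ ≤ ENNReal.ofReal (s (t ∩ B)) + ENNReal.ofReal ε := ENNReal.ofReal_add_le
      _ ≤ (⨆ n, ENNReal.ofReal (s (e n ∩ B))) + ENNReal.ofReal ε :=
          add_le_add_left (hn ▸ le_iSup (fun n => ENNReal.ofReal (s (e n ∩ B))) n) _
  refine ENNReal.le_of_forall_pos_le_add fun δ hδ _ => ?_
  have h := key δ (by exact_mod_cast hδ)
  rwa [ENNReal.ofReal_coe_nnreal] at h

end Aux

/-- let `S` be a standard Borel space and
`M' := {(μ₁, μ₂) ∈ M(S) × M(S) : |μ₁ − μ₂|(S) = μ₁(S) + μ₂(S)}`. Then `M'` is a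
measurable subset of `M(S) × M(S)`, and the Jordan decomposition map
`ψ : μ ↦ (μ⁺, μ⁻)` is a measurable bijection from `M±(S)` onto `M'` whose inverse
`(μ₁, μ₂) ↦ μ₁ − μ₂` is also measurable. -/
theorem jordan_bijection_measurable (S : Type*) [MeasurableSpace S]
    [StandardBorelSpace S] :
    MeasurableSet {p : {μ : Measure S // IsFiniteMeasure μ} ×
        {μ : Measure S // IsFiniteMeasure μ} |
        (toSigned p.1 - toSigned p.2).totalVariation Set.univ
          = p.1.1 Set.univ + p.2.1 Set.univ} ∧
    Measurable (jordanPair (S := S)) ∧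
    Function.Injective (jordanPair (S := S)) ∧
    Set.range (jordanPair (S := S)) =
      {p : {μ : Measure S // IsFiniteMeasure μ} ×
        {μ : Measure S // IsFiniteMeasure μ} |
        (toSigned p.1 - toSigned p.2).totalVariation Set.univ
          = p.1.1 Set.univ + p.2.1 Set.univ} ∧
    (∀ μ : SignedMeasure S,
      toSigned (jordanPair μ).1 - toSigned (jordanPair μ).2 = μ) ∧
    Measurable (fun p : {μ : Measure S // IsFiniteMeasure μ} ×
        {μ : Measure S // IsFiniteMeasure μ} => toSigned p.1 - toSigned p.2) := by
  obtain ⟨e, hem, hkey⟩ := exists_eval_posPart (S := S)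
  have hnegkey : ∀ (s : SignedMeasure S) (B : Set S), MeasurableSet B →
      s.toJordanDecomposition.negPart B = ⨆ n, ENNReal.ofReal (-(s (e n ∩ B))) := by
    intro s B hB
    have h := hkey (-s) B hB
    rw [SignedMeasure.toJordanDecomposition_neg, JordanDecomposition.neg_posPart] at h
    simpa [VectorMeasure.neg_apply] using h
  -- measurability of evaluation of pos/neg parts
  have hmpos : ∀ B : Set S, MeasurableSet B →
      Measurable (fun s : SignedMeasure S => s.toJordanDecomposition.posPart B) := by
    intro B hB
    have heq : (fun s : SignedMeasure S => s.toJordanDecomposition.posPart B)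
        = fun s => ⨆ n, ENNReal.ofReal (s (e n ∩ B)) := funext fun s => hkey s B hB
    rw [heq]
    exact Measurable.iSup fun n =>
      ENNReal.measurable_ofReal.comp (measurable_eval_signed ((hem n).inter hB))
  have hmneg : ∀ B : Set S, MeasurableSet B →
      Measurable (fun s : SignedMeasure S => s.toJordanDecomposition.negPart B) := by
    intro B hB
    have heq : (fun s : SignedMeasure S => s.toJordanDecomposition.negPart B)
        = fun s => ⨆ n, ENNReal.ofReal (-(s (e n ∩ B))) := funext fun s => hnegkey s B hB
    rw [heq]
    exact Measurable.iSup fun n =>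
      ENNReal.measurable_ofReal.comp (measurable_eval_signed ((hem n).inter hB)).neg
  -- measurability of jordanPair
  have hjordan : Measurable (jordanPair (S := S)) := by
    refine Measurable.prod ?_ ?_
    · exact Measurable.subtype_mk
        (Measure.measurable_of_measurable_coe _ fun B hB => hmpos B hB)
    · exact Measurable.subtype_mk
        (Measure.measurable_of_measurable_coe _ fun B hB => hmneg B hB)
  -- measurability of the subtraction map
  have hsubeval : ∀ (p : {μ : Measure S // IsFiniteMeasure μ} ×
      {μ : Measure S // IsFiniteMeasure μ}) {B : Set S}, MeasurableSet B →
      (toSigned p.1 - toSigned p.2) B = (p.1.1 B).toReal - (p.2.1 B).toReal := by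
    intro p B hB
    haveI := p.1.2; haveI := p.2.2
    rw [VectorMeasure.sub_apply, toSigned, toSigned,
      Measure.toSignedMeasure_apply_measurable hB, Measure.toSignedMeasure_apply_measurable hB,
      measureReal_def, measureReal_def]
  have hsubmap : Measurable (fun p : {μ : Measure S // IsFiniteMeasure μ} ×
      {μ : Measure S // IsFiniteMeasure μ} => toSigned p.1 - toSigned p.2) := by
    apply measurable_to_signed
    intro B hB
    have heq : (fun p : {μ : Measure S // IsFiniteMeasure μ} ×
        {μ : Measure S // IsFiniteMeasure μ} => (toSigned p.1 - toSigned p.2) B)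
        = fun p => (p.1.1 B).toReal - (p.2.1 B).toReal := funext fun p => hsubeval p hB
    rw [heq]
    exact (ENNReal.measurable_toReal.comp ((Measure.measurable_coe hB).comp
        (measurable_subtype_coe.comp measurable_fst))).sub
      (ENNReal.measurable_toReal.comp ((Measure.measurable_coe hB).comp
        (measurable_subtype_coe.comp measurable_snd)))
  -- inverse property
  have hinv : ∀ μ : SignedMeasure S,
      toSigned (jordanPair μ).1 - toSigned (jordanPair μ).2 = μ := fun μ =>
    μ.toSignedMeasure_toJordanDecomposition
  -- total variation formula
  have htv : ∀ s : SignedMeasure S, s.totalVariation Set.univ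
      = s.toJordanDecomposition.posPart Set.univ
        + s.toJordanDecomposition.negPart Set.univ := fun s => by
    rw [SignedMeasure.totalVariation, Measure.add_apply]
  -- measurability of the set M'
  have hMset : MeasurableSet {p : {μ : Measure S // IsFiniteMeasure μ} ×
      {μ : Measure S // IsFiniteMeasure μ} |
      (toSigned p.1 - toSigned p.2).totalVariation Set.univ
        = p.1.1 Set.univ + p.2.1 Set.univ} := by
    have hFmeas : Measurable fun p : {μ : Measure S // IsFiniteMeasure μ} ×
        {μ : Measure S // IsFiniteMeasure μ} =>
        (toSigned p.1 - toSigned p.2).totalVariation Set.univ := by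
      have heq : (fun p : {μ : Measure S // IsFiniteMeasure μ} ×
          {μ : Measure S // IsFiniteMeasure μ} =>
          (toSigned p.1 - toSigned p.2).totalVariation Set.univ)
          = (fun s : SignedMeasure S => s.toJordanDecomposition.posPart Set.univ
              + s.toJordanDecomposition.negPart Set.univ)
            ∘ (fun p => toSigned p.1 - toSigned p.2) := funext fun p => htv _
      rw [heq]
      exact ((hmpos _ MeasurableSet.univ).add (hmneg _ MeasurableSet.univ)).comp hsubmap
    have hGmeas : Measurable fun p : {μ : Measure S // IsFiniteMeasure μ} ×
        {μ : Measure S // IsFiniteMeasure μ} =>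
        (p.1.1 Set.univ + p.2.1 Set.univ : ENNReal) :=
      ((Measure.measurable_coe MeasurableSet.univ).comp
        (measurable_subtype_coe.comp measurable_fst)).add
      ((Measure.measurable_coe MeasurableSet.univ).comp
        (measurable_subtype_coe.comp measurable_snd))
    have hFne : ∀ p : {μ : Measure S // IsFiniteMeasure μ} ×
        {μ : Measure S // IsFiniteMeasure μ},
        (toSigned p.1 - toSigned p.2).totalVariation Set.univ ≠ ⊤ := fun p => by
      rw [htv]
      exact ENNReal.add_ne_top.2 ⟨measure_ne_top _ _, measure_ne_top _ _⟩
    have hGne : ∀ p : {μ : Measure S // IsFiniteMeasure μ} ×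
        {μ : Measure S // IsFiniteMeasure μ},
        (p.1.1 Set.univ + p.2.1 Set.univ : ENNReal) ≠ ⊤ := fun p => by
      haveI := p.1.2; haveI := p.2.2
      exact ENNReal.add_ne_top.2 ⟨measure_ne_top _ _, measure_ne_top _ _⟩
    have hseteq : {p : {μ : Measure S // IsFiniteMeasure μ} ×
        {μ : Measure S // IsFiniteMeasure μ} |
        (toSigned p.1 - toSigned p.2).totalVariation Set.univ
          = p.1.1 Set.univ + p.2.1 Set.univ}
        = {p : {μ : Measure S // IsFiniteMeasure μ} ×
        {μ : Measure S // IsFiniteMeasure μ} |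
        ((toSigned p.1 - toSigned p.2).totalVariation Set.univ).toReal
          = (p.1.1 Set.univ + p.2.1 Set.univ : ENNReal).toReal} := by
      ext p
      simp only [Set.mem_setOf_eq]
      exact ⟨fun h => by rw [h], fun h =>
        (ENNReal.toReal_eq_toReal_iff' (hFne p) (hGne p)).1 h⟩
    rw [hseteq]
    exact measurableSet_eq_fun hFmeas.ennreal_toReal hGmeas.ennreal_toReal
  refine ⟨hMset, hjordan, ?_, ?_, hinv, hsubmap⟩
  · -- injectivity
    intro μ₁ μ₂ h
    have h1 : μ₁.toJordanDecomposition = μ₂.toJordanDecomposition :=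
      JordanDecomposition.ext (Subtype.ext_iff.1 (congrArg Prod.fst h))
        (Subtype.ext_iff.1 (congrArg Prod.snd h))
    rw [← μ₁.toSignedMeasure_toJordanDecomposition,
      ← μ₂.toSignedMeasure_toJordanDecomposition, h1]
  · -- range
    ext p
    simp only [Set.mem_range, Set.mem_setOf_eq]
    constructor
    · rintro ⟨μ, rfl⟩
      rw [hinv μ, htv μ]
      rfl
    · intro hp
      haveI := p.1.2; haveI := p.2.2
      set ν : SignedMeasure S := toSigned p.1 - toSigned p.2 with hν
      have hνapp : ∀ A : Set S, MeasurableSet A →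
          ν A = (p.1.1 A).toReal - (p.2.1 A).toReal := fun A hA => hsubeval p hA
      obtain ⟨P, hP₁, hP₂, hP₃, hpos, hneg⟩ := ν.toJordanDecomposition_spec
      have hple : ν.toJordanDecomposition.posPart ≤ p.1.1 := by
        rw [Measure.le_iff]
        intro A hA
        rw [hpos, SignedMeasure.toMeasureOfZeroLE_apply _ hP₂ hP₁ hA,
          ← ENNReal.ofReal_eq_coe_nnreal]
        have h1 : ν (P ∩ A) ≤ (p.1.1 (P ∩ A)).toReal := by
          rw [hνapp _ (hP₁.inter hA)]
          linarith [ENNReal.toReal_nonneg (a := p.2.1 (P ∩ A))]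
        calc ENNReal.ofReal (ν (P ∩ A))
            ≤ ENNReal.ofReal (p.1.1 (P ∩ A)).toReal := ENNReal.ofReal_le_ofReal h1
          _ = p.1.1 (P ∩ A) := ENNReal.ofReal_toReal (measure_ne_top _ _)
          _ ≤ p.1.1 A := measure_mono Set.inter_subset_right
      have hnle : ν.toJordanDecomposition.negPart ≤ p.2.1 := by
        rw [Measure.le_iff]
        intro A hA
        rw [hneg, SignedMeasure.toMeasureOfLEZero_apply _ hP₃ hP₁.compl hA,
          ← ENNReal.ofReal_eq_coe_nnreal]
        have h1 : -ν (Pᶜ ∩ A) ≤ (p.2.1 (Pᶜ ∩ A)).toReal := by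
          rw [hνapp _ (hP₁.compl.inter hA)]
          linarith [ENNReal.toReal_nonneg (a := p.1.1 (Pᶜ ∩ A))]
        calc ENNReal.ofReal (-ν (Pᶜ ∩ A))
            ≤ ENNReal.ofReal (p.2.1 (Pᶜ ∩ A)).toReal := ENNReal.ofReal_le_ofReal h1
          _ = p.2.1 (Pᶜ ∩ A) := ENNReal.ofReal_toReal (measure_ne_top _ _)
          _ ≤ p.2.1 A := measure_mono Set.inter_subset_right
      have huniv : ν.toJordanDecomposition.posPart Set.univ
          + ν.toJordanDecomposition.negPart Set.univ
          = p.1.1 Set.univ + p.2.1 Set.univ := by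
        rw [← htv ν]; exact hp
      obtain ⟨h1, h2⟩ := ennreal_add_cancel (Measure.le_iff'.1 hple Set.univ)
        (Measure.le_iff'.1 hnle Set.univ) huniv (measure_ne_top _ _) (measure_ne_top _ _)
      exact ⟨ν, Prod.ext (Subtype.ext (measure_eq_of_le_of_univ_eq hple h1))
        (Subtype.ext (measure_eq_of_le_of_univ_eq hnle h2))⟩
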